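/- Let c > 1 and for γ > 0 small let μ_{c,γ} = inf_{z>0} [c·ψ(z + γ) − ψ(z)]. Then lim_{γ → 0+} γ·μ_{c,γ} = −(√c − 1)². -/

import Mathlib

open Filter

/-- The digamma function `ψ(x) = (d/dx) log Γ(x)`. -/
noncomputable def digamma (x : ℝ) : ℝ := deriv (fun y => Real.log (Real.Gamma y)) x

lemma diffAt_logGamma {x : ℝ} (hx : 0 < x) :
    DifferentiableAt ℝ (fun y => Real.log (Real.Gamma y)) x :=
  (Real.differentiableAt_Gamma fun m => by
      have : (0:ℝ) ≤ m := Nat.cast_nonneg m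
      intro h; rw [h] at hx; linarith).log (Real.Gamma_pos_of_pos hx).ne'

lemma digamma_mono {a b : ℝ} (ha : 0 < a) (hab : a ≤ b) : digamma a ≤ digamma b := by
  have h := Real.convexOn_log_Gamma.monotoneOn_deriv
      (fun x hx => diffAt_logGamma (Set.mem_Ioi.mp hx))
      (Set.mem_Ioi.mpr ha) (Set.mem_Ioi.mpr (lt_of_lt_of_le ha hab)) hab
  simpa [digamma, Function.comp_def] using h

lemma digamma_add_one {x : ℝ} (hx : 0 < x) : digamma (x + 1) = digamma x + 1 / x := by
  have h1 : (fun y => Real.log (Real.Gamma (y + 1)))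
      =ᶠ[nhds x] (fun y => Real.log y + Real.log (Real.Gamma y)) := by
    filter_upwards [eventually_gt_nhds hx] with y hy
    rw [Real.Gamma_add_one hy.ne', Real.log_mul hy.ne' (Real.Gamma_pos_of_pos hy).ne']
  have h2 : deriv (fun y => Real.log (Real.Gamma (y + 1))) x = digamma (x + 1) := by
    have := deriv_comp_add_const (fun y => Real.log (Real.Gamma y)) 1 x
    simpa [digamma] using this
  have h3 : deriv (fun y => Real.log y + Real.log (Real.Gamma y)) x = 1 / x + digamma x := by
    rw [deriv_fun_add (Real.differentiableAt_log hx.ne') (diffAt_logGamma hx), Real.deriv_log]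
    rw [one_div]; rfl
  rw [← h2, h1.deriv_eq, h3, add_comm]

/-- With `μ_{c,γ} = inf_{z>0} [c·ψ(z + γ) - ψ(z)]`, one has
`γ·μ_{c,γ} → -(√c - 1)²` as `γ → 0+`. -/
theorem gamma_mul_mu_tendsto (c : ℝ) (hc : 1 < c) :
    Tendsto
      (fun γ : ℝ =>
        γ * sInf {y : ℝ | ∃ z : ℝ, 0 < z ∧ y = c * digamma (z + γ) - digamma z})
      (nhdsWithin 0 (Set.Ioi 0))
      (nhds (-(Real.sqrt c - 1) ^ 2)) := by
  set s := Real.sqrt c with hs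
  have hc0 : (0:ℝ) < c := by linarith
  have hs1 : 1 < s := by
    rw [hs, show (1:ℝ) = Real.sqrt 1 by simp]
    exact Real.sqrt_lt_sqrt zero_le_one hc
  have hs2 : s ^ 2 = c := Real.sq_sqrt hc0.le
  -- decomposition of f γ z
  have hdecomp : ∀ γ z : ℝ, 0 < γ → 0 < z →
      c * digamma (z + γ) - digamma z
        = (1 / z - c / (z + γ)) + (c * digamma (z + γ + 1) - digamma (z + 1)) := by
    intro γ z hγ hz
    have hzγ : 0 < z + γ := by linarith
    have e1 := digamma_add_one hz
    have e2 := digamma_add_one hzγ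
    have : digamma (z + γ) = digamma (z + γ + 1) - 1 / (z + γ) := by linarith
    rw [this, show digamma z = digamma (z + 1) - 1 / z by linarith]
    field_simp
    ring
  -- algebraic kernel bound
  have hker : ∀ γ z : ℝ, 0 < γ → 0 < z → -(s - 1) ^ 2 / γ ≤ 1 / z - c / (z + γ) := by
    intro γ z hγ hz
    have hzγ : 0 < z + γ := by linarith
    rw [← sub_nonneg]
    have heq : 1 / z - c / (z + γ) - -(s - 1) ^ 2 / γ
        = ((s - 1) * z - γ) ^ 2 / (γ * z * (z + γ)) := by
      rw [← hs2]; field_simp; ring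
    rw [heq]; positivity
  -- lower bound on every element of the set
  have hlow : ∀ γ z : ℝ, 0 < γ → 0 < z →
      -(s - 1) ^ 2 / γ + (c - 1) * digamma 1
        ≤ c * digamma (z + γ) - digamma z := by
    intro γ z hγ hz
    rw [hdecomp γ z hγ hz]
    have h1 : digamma (z + 1) ≤ digamma (z + γ + 1) :=
      digamma_mono (by linarith) (by linarith)
    have h2 : digamma 1 ≤ digamma (z + 1) := digamma_mono one_pos (by linarith)
    have := hker γ z hγ hz
    nlinarith [mul_le_mul_of_nonneg_left h1 hc0.le]
  -- the set, for each γ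
  have hbdd : ∀ γ : ℝ, 0 < γ →
      BddBelow {y : ℝ | ∃ z : ℝ, 0 < z ∧ y = c * digamma (z + γ) - digamma z} := by
    intro γ hγ
    exact ⟨-(s - 1) ^ 2 / γ + (c - 1) * digamma 1, by
      rintro y ⟨z, hz, rfl⟩; exact hlow γ z hγ hz⟩
  have hne : ∀ γ : ℝ, {y : ℝ | ∃ z : ℝ, 0 < z ∧ y = c * digamma (z + γ) - digamma z}.Nonempty :=
    fun γ => ⟨_, 1, one_pos, rfl⟩
  set M : ℝ := c * digamma 2 - digamma 1 with hM
  set L : ℝ := (c - 1) * digamma 1 with hL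
  -- squeeze
  have hlowall : ∀ᶠ γ in nhdsWithin (0:ℝ) (Set.Ioi 0),
      -(s - 1) ^ 2 + γ * L ≤
        γ * sInf {y : ℝ | ∃ z : ℝ, 0 < z ∧ y = c * digamma (z + γ) - digamma z} := by
    filter_upwards [self_mem_nhdsWithin] with γ (hγ : 0 < γ)
    have h := le_csInf (hne γ) (fun y hy => by
      obtain ⟨z, hz, rfl⟩ := hy; exact hlow γ z hγ hz)
    have := mul_le_mul_of_nonneg_left h hγ.le
    calc -(s - 1) ^ 2 + γ * L = γ * (-(s - 1) ^ 2 / γ + L) := by field_simp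
    _ ≤ _ := this
  have hupall : ∀ᶠ γ in nhdsWithin (0:ℝ) (Set.Ioi 0),
      γ * sInf {y : ℝ | ∃ z : ℝ, 0 < z ∧ y = c * digamma (z + γ) - digamma z} ≤
        -(s - 1) ^ 2 + γ * M := by
    have hε : (0:ℝ) < (s - 1) / s := div_pos (by linarith) (by linarith)
    filter_upwards [self_mem_nhdsWithin,
      (eventually_lt_nhds hε).filter_mono nhdsWithin_le_nhds] with γ (hγ : 0 < γ) hγε
    set z₀ : ℝ := γ / (s - 1) with hz₀
    have hz₀pos : 0 < z₀ := div_pos hγ (by linarith)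
    have hs0 : (0:ℝ) < s := by linarith
    have hz₀γ : z₀ + γ ≤ 1 := by
      rw [hz₀]
      rw [div_add' _ _ _ (by linarith : s - 1 ≠ 0), div_le_one (by linarith)]
      have : γ * s < (s - 1) / s * s := by
        exact mul_lt_mul_of_pos_right hγε hs0
      rw [div_mul_cancel₀ _ hs0.ne'] at this
      nlinarith
    have hmem : c * digamma (z₀ + γ) - digamma z₀ ∈
        {y : ℝ | ∃ z : ℝ, 0 < z ∧ y = c * digamma (z + γ) - digamma z} :=
      ⟨z₀, hz₀pos, rfl⟩
    have hinf := csInf_le (hbdd γ hγ) hmem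
    have hval : 1 / z₀ - c / (z₀ + γ) = -(s - 1) ^ 2 / γ := by
      have h1 : s - 1 ≠ 0 := by linarith
      have e1 : (1:ℝ) / z₀ = (s - 1) / γ := by rw [hz₀, one_div_div]
      have hd : z₀ + γ = γ * s / (s - 1) := by
        rw [hz₀, div_add' _ _ _ h1]
        congr 1; ring
      have e2 : c / (z₀ + γ) = s * (s - 1) / γ := by
        rw [hd, div_div_eq_mul_div,
          div_eq_div_iff (by positivity : γ * s ≠ 0) hγ.ne', ← hs2]
        ring
      rw [e1, e2, div_sub_div_same]
      congr 1; ring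
    have hbound : c * digamma (z₀ + γ) - digamma z₀ ≤ -(s - 1) ^ 2 / γ + M := by
      rw [hdecomp γ z₀ hγ hz₀pos, hval]
      have h1 : digamma (z₀ + γ + 1) ≤ digamma 2 :=
        digamma_mono (by linarith) (by linarith)
      have h2 : digamma 1 ≤ digamma (z₀ + 1) := digamma_mono one_pos (by linarith)
      have := mul_le_mul_of_nonneg_left h1 hc0.le
      rw [hM]; linarith
    have := mul_le_mul_of_nonneg_left (hinf.trans hbound) hγ.le
    calc γ * sInf _ ≤ γ * (-(s - 1) ^ 2 / γ + M) := this
    _ = -(s - 1) ^ 2 + γ * M := by field_simp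
  have hlim : ∀ K : ℝ, Tendsto (fun γ : ℝ => -(s - 1) ^ 2 + γ * K)
      (nhdsWithin 0 (Set.Ioi 0)) (nhds (-(s - 1) ^ 2)) := by
    intro K
    have hcont : Continuous (fun γ : ℝ => -(s - 1) ^ 2 + γ * K) := by fun_prop
    have : Tendsto (fun γ : ℝ => -(s - 1) ^ 2 + γ * K) (nhds 0) (nhds (-(s - 1) ^ 2)) := by
      simpa using hcont.tendsto 0
    exact this.mono_left nhdsWithin_le_nhds
  exact tendsto_of_tendsto_of_tendsto_of_le_of_le' (hlim L) (hlim M) hlowall hupall
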